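/- Let w₁,…,w_k be linearly independent vectors in ℝ^n chosen from a finite set W of vectors so that the parallelepiped volume vol(w₁,…,w_k) is maximal among all k-element linearly independent subsets of W, where k = dim(span W). Then every w ∈ W can be written as w = Σᵢ λᵢwᵢ with |λᵢ| ≤ 1 for all i. -/

import Mathlib

open Matrix Finset

/-- The k-dimensional volume of the parallelepiped spanned by the vectors `v`,
defined as the square root of the Gram determinant. -/
noncomputable def vol {n k : ℕ} (v : Fin k → EuclideanSpace ℝ (Fin n)) : ℝ :=
  Real.sqrt (Matrix.det (Matrix.of fun i j => (inner ℝ (v i) (v j) : ℝ)))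

private def cmat {n k : ℕ} (v : Fin k → EuclideanSpace ℝ (Fin n)) :
    Matrix (Fin n) (Fin k) ℝ := Matrix.of fun x i => v i x

private lemma gram_eq {n k : ℕ} (v : Fin k → EuclideanSpace ℝ (Fin n)) :
    (Matrix.of fun i j => (inner ℝ (v i) (v j) : ℝ)) = (cmat v)ᵀ * cmat v := by
  ext i j
  simp [cmat, Matrix.mul_apply, PiLp.inner_apply]
  exact Finset.sum_congr rfl fun _ _ => mul_comm _ _

private lemma cmat_comb {n k : ℕ} (w : Fin k → EuclideanSpace ℝ (Fin n))
    (A : Matrix (Fin k) (Fin k) ℝ) :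
    cmat (fun i => ∑ p, A p i • w p) = cmat w * A := by
  ext x i
  simp only [cmat, Matrix.mul_apply, Matrix.of_apply]
  rw [WithLp.ofLp_sum, Finset.sum_apply]
  simp [mul_comm]

private lemma gram_transform {n k : ℕ} (w : Fin k → EuclideanSpace ℝ (Fin n))
    (A : Matrix (Fin k) (Fin k) ℝ) :
    (Matrix.of fun i j =>
        (inner ℝ ((fun i => ∑ p, A p i • w p) i) ((fun i => ∑ p, A p i • w p) j) : ℝ))
      = Aᵀ * (Matrix.of fun i j => (inner ℝ (w i) (w j) : ℝ)) * A := by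
  rw [gram_eq, gram_eq, cmat_comb, Matrix.transpose_mul]
  simp [Matrix.mul_assoc]

private lemma gram_posDef {n k : ℕ} {w : Fin k → EuclideanSpace ℝ (Fin n)}
    (hli : LinearIndependent ℝ w) :
    (Matrix.of fun i j => (inner ℝ (w i) (w j) : ℝ)).PosDef := by
  refine posDef_iff_dotProduct_mulVec.mpr ⟨?_, ?_⟩
  · ext i j
    simp only [Matrix.conjTranspose_apply, Matrix.of_apply, star_trivial]
    exact real_inner_comm _ _
  · intro x hx
    have key : dotProduct (star x) ((Matrix.of fun i j => (inner ℝ (w i) (w j) : ℝ)) *ᵥ x)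
        = ‖∑ i, x i • w i‖ ^ 2 := by
      rw [← real_inner_self_eq_norm_sq]
      simp only [dotProduct, mulVec, star_trivial, Matrix.of_apply,
        sum_inner, inner_sum, real_inner_smul_left, real_inner_smul_right, dotProduct]
      simp [Finset.mul_sum, mul_comm, mul_left_comm]
      exact Finset.sum_congr rfl fun _ _ => Finset.sum_congr rfl fun _ _ => by rw [real_inner_comm]
    rw [key]
    have hne : ∑ i, x i • w i ≠ 0 := by
      intro h
      exact hx (funext fun i => Fintype.linearIndependent_iff.mp hli x h i)
    have : 0 < ‖∑ i, x i • w i‖ := norm_pos_iff.mpr hne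
    positivity

private lemma vol_comb {n k : ℕ} (w : Fin k → EuclideanSpace ℝ (Fin n))
    (A : Matrix (Fin k) (Fin k) ℝ) :
    vol (fun i => ∑ p, A p i • w p) = |A.det| * vol w := by
  unfold vol
  rw [gram_transform, Matrix.det_mul, Matrix.det_mul, Matrix.det_transpose]
  rw [show A.det * (Matrix.of fun i j => (inner ℝ (w i) (w j) : ℝ)).det * A.det
      = A.det ^ 2 * (Matrix.of fun i j => (inner ℝ (w i) (w j) : ℝ)).det by ring]
  rw [Real.sqrt_mul (sq_nonneg _), Real.sqrt_sq_eq_abs]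

/-- If w₁,…,w_k are linearly independent vectors from a finite set W, with
k = dim span W, maximizing the parallelepiped volume among all linearly independent
k-tuples from W, then every w ∈ W is a combination of the wᵢ with coefficients
of absolute value at most 1. -/
theorem stmt3 {n k : ℕ} (W : Finset (EuclideanSpace ℝ (Fin n)))
    (hk : k = Module.finrank ℝ (Submodule.span ℝ (W : Set (EuclideanSpace ℝ (Fin n)))))
    (w : Fin k → EuclideanSpace ℝ (Fin n))
    (hwW : ∀ i, w i ∈ W) (hli : LinearIndependent ℝ w)
    (hmax : ∀ u : Fin k → EuclideanSpace ℝ (Fin n),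
      (∀ i, u i ∈ W) → LinearIndependent ℝ u → vol u ≤ vol w) :
    ∀ v ∈ W, ∃ lam : Fin k → ℝ, v = ∑ i, lam i • w i ∧ ∀ i, |lam i| ≤ 1 := by
  intro v hv
  set S := Submodule.span ℝ (W : Set (EuclideanSpace ℝ (Fin n))) with hS
  haveI : FiniteDimensional ℝ S := FiniteDimensional.span_of_finite ℝ (W.finite_toSet)
  have hvS : v ∈ S := Submodule.subset_span hv
  rcases Nat.eq_zero_or_pos k with hk0 | hkpos
  · subst hk0
    refine ⟨fun i => 0, ?_, fun i => i.elim0⟩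
    have : S = ⊥ := Submodule.finrank_eq_zero.mp hk.symm
    rw [this] at hvS
    simpa using hvS
  haveI : Nonempty (Fin k) := ⟨⟨0, hkpos⟩⟩
  -- bundled family in S
  have hli' : LinearIndependent ℝ (fun i => (⟨w i, Submodule.subset_span (hwW i)⟩ : S)) :=
    LinearIndependent.of_comp S.subtype (by exact hli)
  have hcard : Fintype.card (Fin k) = Module.finrank ℝ S := by rw [Fintype.card_fin]; exact hk
  set b := basisOfLinearIndependentOfCardEqFinrank hli' hcard with hb
  set lam : Fin k → ℝ := fun i => b.repr ⟨v, hvS⟩ i with hlam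
  have hrepr : v = ∑ i, lam i • w i := by
    have h1 := b.sum_repr ⟨v, hvS⟩
    have h2 : ((∑ i, b.repr ⟨v, hvS⟩ i • b i : S) : EuclideanSpace ℝ (Fin n)) = v :=
      congrArg _ h1
    rw [← h2]
    push_cast [hb, coe_basisOfLinearIndependentOfCardEqFinrank]
    rfl
  refine ⟨lam, hrepr, fun j => ?_⟩
  by_contra hj
  push_neg at hj
  -- exchange argument
  set A : Matrix (Fin k) (Fin k) ℝ := (1 : Matrix (Fin k) (Fin k) ℝ).updateCol j lam with hA
  have hdetA : A.det = lam j := by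
    rw [hA, ← Matrix.cramer_apply, Matrix.cramer_one]
    rfl
  have hdetA_ne : A.det ≠ 0 := by
    rw [hdetA]
    intro h
    rw [h] at hj
    simp at hj
    linarith
  set u : Fin k → EuclideanSpace ℝ (Fin n) := fun i => ∑ p, A p i • w p with hu
  have huj : u j = v := by
    rw [hu]
    simp only [hA, Matrix.updateCol_apply, if_pos rfl]
    simp only [if_true]
    exact hrepr.symm
  have hui : ∀ i, i ≠ j → u i = w i := by
    intro i hij
    rw [hu]
    simp only [hA, Matrix.updateCol_apply, if_neg hij]
    simp [Matrix.one_apply]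
  have huW : ∀ i, u i ∈ W := by
    intro i
    by_cases hij : i = j
    · rw [hij, huj]; exact hv
    · rw [hui i hij]; exact hwW i
  have huli : LinearIndependent ℝ u := by
    rw [Fintype.linearIndependent_iff]
    intro c hc
    have hsum : ∑ p, (A *ᵥ c) p • w p = 0 := by
      rw [← hc]
      simp only [hu, Matrix.mulVec, dotProduct, Finset.sum_smul, Finset.smul_sum,
        smul_smul]
      rw [Finset.sum_comm]
      exact Finset.sum_congr rfl fun i _ => Finset.sum_congr rfl fun p _ => by ring_nf
    have hAc : A *ᵥ c = 0 :=
      funext fun p => Fintype.linearIndependent_iff.mp hli _ hsum p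
    have := Matrix.eq_zero_of_mulVec_eq_zero hdetA_ne hAc
    exact fun i => congrFun this i
  have hvolw : 0 < vol w := Real.sqrt_pos.mpr (gram_posDef hli).det_pos
  have hvolu : vol u = |lam j| * vol w := by
    rw [hu, vol_comb, hdetA]
  have := hmax u huW huli
  rw [hvolu] at this
  nlinarith
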